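/- Let Γ be a finite graph in which every vertex has degree at least 2, and let α be a fixed-point-free involution of the vertex set of Γ that preserves vertex degrees. Then there exists a vertex v of Γ such that both v and α(v) lie on cycles of Γ. Moreover, if Γ has some vertex of degree greater than 2, then v can be chosen to have degree greater than 2. -/

import Mathlib

/-- A finite multigraph: finitely many vertices and edges; each edge has an
ordered pair of endpoints (loops and multiple edges allowed). -/
structure Multigraph where
  V : Type
  E : Type
  [fintV : Fintype V]
  [fintE : Fintype E]
  [decV : DecidableEq V]
  [decE : DecidableEq E]
  ends : E → V × V

attribute [instance] Multigraph.fintV Multigraph.fintE Multigraph.decV Multigraph.decE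

namespace Multigraph

variable (G : Multigraph)

/-- The degree of a vertex; a loop at `v` contributes 2. -/
def deg (v : G.V) : ℕ :=
  (Finset.univ.filter (fun e => (G.ends e).1 = v)).card +
  (Finset.univ.filter (fun e => (G.ends e).2 = v)).card

/-- Adjacency via some edge. -/
def Adj (u w : G.V) : Prop := ∃ e, G.ends e = (u, w) ∨ G.ends e = (w, u)

/-- The graph is connected: any two vertices are joined by a walk. -/
def Connected : Prop := ∀ u w : G.V, Relation.ReflTransGen G.Adj u w

/-- A cycle (circuit / simple closed curve) in a multigraph: a cyclic sequence of
`n ≥ 1` distinct vertices joined by `n` distinct edges.  A loop (`n = 1`) and a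
pair of parallel edges (`n = 2`) are cycles. -/
structure Cycle (G : Multigraph) where
  n : ℕ
  npos : 0 < n
  v : ZMod n → G.V
  e : ZMod n → G.E
  vinj : Function.Injective v
  einj : Function.Injective e
  compat : ∀ i : ZMod n, G.ends (e i) = (v i, v (i + 1)) ∨ G.ends (e i) = (v (i + 1), v i)

/-- A vertex lies on a cycle. -/
def OnCycle (x : G.V) : Prop := ∃ (c : Cycle G) (i : ZMod c.n), c.v i = x

/-- The graph contains no cycle; equivalently every component of its underlying
space is a tree. -/
def Acyclic : Prop := IsEmpty (Cycle G)

/-- A leaf (endpoint): a vertex of degree 1. -/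
def IsLeaf (x : G.V) : Prop := G.deg x = 1

end Multigraph

namespace Multigraph

open Finset

attribute [local instance] Classical.propDecidable

variable (G : Multigraph)

/-- An edge is incident to a vertex. -/
def Inc (e : G.E) (v : G.V) : Prop := (G.ends e).1 = v ∨ (G.ends e).2 = v

/-- An edge lies on a cycle. -/
def CyclicEdge (e : G.E) : Prop := ∃ (c : Cycle G) (i : ZMod c.n), c.e i = e

/-- Incidence count of `v` among the edges of `F`. -/
def idg (F : Finset G.E) (v : G.V) : ℕ :=
  (F.filter (fun e => (G.ends e).1 = v)).card +
  (F.filter (fun e => (G.ends e).2 = v)).card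

variable {G}

lemma deg_eq_idg_univ (v : G.V) : G.deg v = G.idg univ v := by
  classical
  unfold deg idg
  congr 1

lemma loop_cyclicEdge {e : G.E} {u : G.V} (h : G.ends e = (u, u)) : G.CyclicEdge e := by
  refine ⟨⟨1, one_pos, fun _ => u, fun _ => e, fun a b _ => Subsingleton.elim a b,
    fun a b _ => Subsingleton.elim a b, fun i => Or.inl (by simpa using h)⟩, 0, rfl⟩

lemma mk_cycle (n : ℕ) (hn : 1 ≤ n) (p : Fin (n+1) → G.V) (hp : Function.Injective p)
    (f : Fin n → G.E) (hf : Function.Injective f)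
    (hc : ∀ t : Fin n, G.ends (f t) = (p t.castSucc, p t.succ) ∨
      G.ends (f t) = (p t.succ, p t.castSucc))
    (e' : G.E) (he' : ∀ t, f t ≠ e')
    (hend : G.ends e' = (p (Fin.last n), p 0) ∨ G.ends e' = (p 0, p (Fin.last n))) :
    G.CyclicEdge e' := by
  haveI : NeZero (n + 1) := ⟨Nat.succ_ne_zero n⟩
  haveI : Fact (1 < n + 1) := ⟨by omega⟩
  have hvlt : ∀ z : ZMod (n+1), z.val < n + 1 := fun z => ZMod.val_lt z
  have hadd : ∀ z : ZMod (n+1), (z + 1).val = (z.val + 1) % (n+1) := by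
    intro z; rw [ZMod.val_add, ZMod.val_one]
  refine ⟨⟨n+1, Nat.succ_pos n,
    fun z => p ⟨z.val, hvlt z⟩,
    fun z => if h : z.val < n then f ⟨z.val, h⟩ else e', ?_, ?_, ?_⟩,
    (n : ZMod (n+1)), ?_⟩
  · intro a b hab
    have h1 : (⟨a.val, hvlt a⟩ : Fin (n+1)) = ⟨b.val, hvlt b⟩ := hp hab
    exact ZMod.val_injective _ (congrArg Fin.val h1)
  · intro a b hab
    dsimp only at hab
    by_cases ha : a.val < n <;> by_cases hb : b.val < n
    · rw [dif_pos ha, dif_pos hb] at hab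
      have h2 := hf hab
      apply ZMod.val_injective
      injection h2
    · rw [dif_pos ha, dif_neg hb] at hab; exact absurd hab (he' _)
    · rw [dif_neg ha, dif_pos hb] at hab; exact absurd hab.symm (he' _)
    · apply ZMod.val_injective
      have h1 := hvlt a; have h2 := hvlt b; omega
  · intro z
    by_cases h : z.val < n
    · have hz2 : (z + 1).val = z.val + 1 := by rw [hadd, Nat.mod_eq_of_lt (by omega)]
      have h1 : (⟨(z+1).val, hvlt _⟩ : Fin (n+1)) = (⟨z.val, h⟩ : Fin n).succ := by
        apply Fin.ext; simp [hz2, Fin.val_succ]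
      have h0 : (⟨z.val, hvlt z⟩ : Fin (n+1)) = (⟨z.val, h⟩ : Fin n).castSucc := by
        apply Fin.ext; simp
      rw [dif_pos h, h0, h1]
      exact hc _
    · have hzn : z.val = n := by have := hvlt z; omega
      have hz2 : (z + 1).val = 0 := by rw [hadd, hzn, Nat.mod_self]
      have h1 : (⟨(z+1).val, hvlt _⟩ : Fin (n+1)) = 0 := by apply Fin.ext; simp [hz2]
      have h0 : (⟨z.val, hvlt z⟩ : Fin (n+1)) = Fin.last n := by apply Fin.ext; simp [hzn]
      rw [dif_neg h, h0, h1]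
      exact hend
  · dsimp only
    have hnv : ((n : ZMod (n+1))).val = n := by
      rw [ZMod.val_natCast, Nat.mod_eq_of_lt (by omega)]
    rw [dif_neg (by rw [hnv]; exact lt_irrefl n)]

lemma onCycle_of_inc {e : G.E} {u : G.V} (hc : G.CyclicEdge e) (hi : G.Inc e u) :
    G.OnCycle u := by
  obtain ⟨c, i, rfl⟩ := hc
  rcases c.compat i with h | h <;> rcases hi with hu | hu <;>
    · rw [h] at hu; exact ⟨c, _, hu⟩

lemma idg_mono {F F' : Finset G.E} (h : F' ⊆ F) (v : G.V) : G.idg F' v ≤ G.idg F v :=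
  Nat.add_le_add (card_le_card (filter_subset_filter _ h)) (card_le_card (filter_subset_filter _ h))

lemma exists_inc_of_idg_pos {F : Finset G.E} {v : G.V} (h : 0 < G.idg F v) :
    ∃ e ∈ F, G.Inc e v := by
  unfold idg at h
  rcases Nat.eq_zero_or_pos (F.filter (fun e => (G.ends e).1 = v)).card with h1 | h1
  · have h2 : 0 < (F.filter (fun e => (G.ends e).2 = v)).card := by omega
    obtain ⟨e, he⟩ := card_pos.1 h2
    exact ⟨e, (mem_filter.1 he).1, Or.inr (mem_filter.1 he).2⟩
  · obtain ⟨e, he⟩ := card_pos.1 h1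
    exact ⟨e, (mem_filter.1 he).1, Or.inl (mem_filter.1 he).2⟩

lemma idg_pos_of_inc {F : Finset G.E} {e : G.E} {v : G.V} (he : e ∈ F) (hi : G.Inc e v) :
    0 < G.idg F v := by
  rcases hi with h | h
  · exact Nat.lt_of_lt_of_le (card_pos.2 ⟨e, mem_filter.2 ⟨he, h⟩⟩) (Nat.le_add_right _ _)
  · exact Nat.lt_of_lt_of_le (card_pos.2 ⟨e, mem_filter.2 ⟨he, h⟩⟩) (Nat.le_add_left _ _)

lemma idg_erase {F : Finset G.E} {e : G.E} {v : G.V} (he : e ∈ F) (hi : G.Inc e v)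
    (hnl : (G.ends e).1 ≠ (G.ends e).2) : G.idg (F.erase e) v + 1 = G.idg F v := by
  unfold idg
  rw [filter_erase, filter_erase]
  rcases hi with h | h
  · have h2 : e ∉ F.filter (fun e => (G.ends e).2 = v) := by
      intro hm
      exact hnl (by rw [h, (mem_filter.1 hm).2])
    rw [card_erase_of_mem (mem_filter.2 ⟨he, h⟩), erase_eq_of_notMem h2]
    have : 0 < (F.filter (fun e => (G.ends e).1 = v)).card :=
      card_pos.2 ⟨e, mem_filter.2 ⟨he, h⟩⟩
    omega
  · have h2 : e ∉ F.filter (fun e => (G.ends e).1 = v) := by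
      intro hm
      exact hnl (by rw [h, (mem_filter.1 hm).2])
    rw [erase_eq_of_notMem h2, card_erase_of_mem (mem_filter.2 ⟨he, h⟩)]
    have : 0 < (F.filter (fun e => (G.ends e).2 = v)).card :=
      card_pos.2 ⟨e, mem_filter.2 ⟨he, h⟩⟩
    omega

lemma two_le_idg_of_two_inc {F : Finset G.E} {a b : G.E} {v : G.V} (ha : a ∈ F) (hb : b ∈ F)
    (hab : a ≠ b) (hia : G.Inc a v) (hib : G.Inc b v) : 2 ≤ G.idg F v := by
  have hsub : ({a, b} : Finset G.E) ⊆
      F.filter (fun e => (G.ends e).1 = v) ∪ F.filter (fun e => (G.ends e).2 = v) := by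
    intro x hx
    rcases mem_insert.1 hx with rfl | hx
    · rcases hia with h | h
      · exact mem_union_left _ (mem_filter.2 ⟨ha, h⟩)
      · exact mem_union_right _ (mem_filter.2 ⟨ha, h⟩)
    · rcases mem_singleton.1 hx with rfl
      rcases hib with h | h
      · exact mem_union_left _ (mem_filter.2 ⟨hb, h⟩)
      · exact mem_union_right _ (mem_filter.2 ⟨hb, h⟩)
  calc 2 = ({a, b} : Finset G.E).card := (card_pair hab).symm
    _ ≤ _ := card_le_card hsub
    _ ≤ _ := card_union_le _ _

lemma sum_idg (F : Finset G.E) : ∑ v, G.idg F v = 2 * F.card := by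
  unfold idg
  rw [Finset.sum_add_distrib, ← Finset.card_eq_sum_card_fiberwise
      (f := fun e => (G.ends e).1) (fun x _ => mem_univ _),
    ← Finset.card_eq_sum_card_fiberwise (f := fun e => (G.ends e).2) (fun x _ => mem_univ _)]
  ring

lemma nonloop_of_bridge {B : Finset G.E} (hB : ∀ e ∈ B, ¬ G.CyclicEdge e) {e : G.E}
    (he : e ∈ B) : (G.ends e).1 ≠ (G.ends e).2 := by
  intro h
  exact hB e he (loop_cyclicEdge (Prod.ext rfl h.symm))

lemma path_ext {B : Finset G.E} (hB : ∀ e ∈ B, ¬ G.CyclicEdge e)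
    (hleaf : ∀ u, G.idg B u ≠ 1)
    (k : ℕ) (hk : 1 ≤ k) (v : Fin (k+1) → G.V) (hv : Function.Injective v)
    (e : Fin k → G.E) (heB : ∀ j, e j ∈ B) (hei : Function.Injective e)
    (hcp : ∀ j : Fin k, G.ends (e j) = (v j.castSucc, v j.succ) ∨
      G.ends (e j) = (v j.succ, v j.castSucc)) :
    ∃ v' : Fin (k+2) → G.V, Function.Injective v' ∧
    ∃ e' : Fin (k+1) → G.E, (∀ j, e' j ∈ B) ∧ Function.Injective e' ∧
      ∀ j : Fin (k+1), G.ends (e' j) = (v' j.castSucc, v' j.succ) ∨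
        G.ends (e' j) = (v' j.succ, v' j.castSucc) := by
  set jl : Fin k := ⟨k-1, by omega⟩ with hjl
  have hsucc : jl.succ = Fin.last k := Fin.ext (by simp [hjl, Fin.last]; omega)
  have hIncl : G.Inc (e jl) (v (Fin.last k)) := by
    rcases hcp jl with h | h
    · exact Or.inr (by rw [h, ← hsucc])
    · exact Or.inl (by rw [h, ← hsucc])
  have h2 : 2 ≤ G.idg B (v (Fin.last k)) := by
    have := idg_pos_of_inc (heB jl) hIncl
    have := hleaf (v (Fin.last k))
    omega
  have herase := idg_erase (heB jl) hIncl (nonloop_of_bridge hB (heB jl))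
  obtain ⟨e2, he2mem, he2inc⟩ := exists_inc_of_idg_pos
    (show 0 < G.idg (B.erase (e jl)) (v (Fin.last k)) by omega)
  have he2B : e2 ∈ B := mem_of_mem_erase he2mem
  have he2ne : e2 ≠ e jl := ne_of_mem_erase he2mem
  have he2nl : (G.ends e2).1 ≠ (G.ends e2).2 := nonloop_of_bridge hB he2B
  obtain ⟨w, hwne, hwe⟩ : ∃ w, w ≠ v (Fin.last k) ∧
      (G.ends e2 = (v (Fin.last k), w) ∨ G.ends e2 = (w, v (Fin.last k))) := by
    rcases he2inc with h | h
    · exact ⟨(G.ends e2).2, fun hh => he2nl (h.trans hh.symm),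
        Or.inl (Prod.ext h rfl)⟩
    · exact ⟨(G.ends e2).1, fun hh => he2nl (hh.trans h.symm),
        Or.inr (Prod.ext rfl h)⟩
  have hnotin : ∀ j, e j ≠ e2 := by
    intro j hj
    by_cases hjjl : j = jl
    · exact he2ne (hjjl ▸ hj).symm
    · have hji : G.Inc (e j) (v (Fin.last k)) := hj ▸ he2inc
      have hjlt : j.val < k - 1 ∨ j.val = k - 1 := by omega
      have hjv : j.val ≠ k - 1 := fun hh => hjjl (Fin.ext hh)
      have hcs : j.castSucc ≠ Fin.last k := by
        intro hh
        have := congrArg Fin.val hh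
        simp [Fin.last] at this
        omega
      have hsc : j.succ ≠ Fin.last k := by
        intro hh
        have := congrArg Fin.val hh
        simp [Fin.last] at this
        omega
      rcases hcp j with h | h <;> rcases hji with h1 | h1 <;> rw [h] at h1 <;>
        simp at h1 <;> first
        | exact hcs (hv h1) | exact hsc (hv h1)
  by_cases hwr : ∃ i : Fin (k+1), v i = w
  · exfalso
    obtain ⟨i, hi⟩ := hwr
    have hine : i ≠ Fin.last k := fun hh => hwne (hh ▸ hi).symm
    have hilt : i.val < k := by
      have := i.isLt
      have : i.val ≠ k := fun hh => hine (Fin.ext (by simp [Fin.last, hh]))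
      omega
    set m := k - i.val with hm
    have hm1 : 1 ≤ m := by omega
    have hcyc : G.CyclicEdge e2 := by
      refine mk_cycle m hm1
        (fun t => v ⟨i.val + t.val, by have := t.isLt; omega⟩) ?_
        (fun t => e ⟨i.val + t.val, by have := t.isLt; omega⟩) ?_ ?_ e2 ?_ ?_
      · intro a b hab
        dsimp only at hab
        have h3 : i.val + a.val = i.val + b.val := congrArg Fin.val (hv hab)
        exact Fin.ext (by omega)
      · intro a b hab
        dsimp only at hab
        have h3 : i.val + a.val = i.val + b.val := congrArg Fin.val (hei hab)
        exact Fin.ext (by omega)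
      · intro t
        rcases hcp ⟨i.val + t.val, by have := t.isLt; omega⟩ with h | h
        · left
          rw [h]
          exact Prod.ext (congrArg v (Fin.ext (by simp)))
            (congrArg v (Fin.ext (by simp; omega)))
        · right
          rw [h]
          exact Prod.ext (congrArg v (Fin.ext (by simp; omega)))
            (congrArg v (Fin.ext (by simp)))
      · intro t
        exact hnotin _
      · have hlst : (⟨i.val + ((Fin.last m).val), by have := (Fin.last m).isLt; omega⟩ :
            Fin (k+1)) = Fin.last k := Fin.ext (by simp [Fin.last]; omega)
        have hzro : v (⟨i.val + ((0 : Fin (m+1)).val), by omega⟩ : Fin (k+1)) = w := by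
          rw [← hi]
          exact congrArg v (Fin.ext (by simp))
        rcases hwe with h | h
        · left; rw [h, hlst, hzro]
        · right; rw [h, hlst, hzro]
    exact hB e2 he2B hcyc
  · push_neg at hwr
    refine ⟨Fin.snoc v w, ?_, Fin.snoc e e2, ?_, ?_, ?_⟩
    · intro a b hab
      rcases Fin.eq_castSucc_or_eq_last a with ⟨a', rfl⟩ | rfl <;>
        rcases Fin.eq_castSucc_or_eq_last b with ⟨b', rfl⟩ | rfl
      · rw [Fin.snoc_castSucc, Fin.snoc_castSucc] at hab
        rw [hv hab]
      · rw [Fin.snoc_castSucc, Fin.snoc_last] at hab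
        exact absurd hab (hwr a')
      · rw [Fin.snoc_last, Fin.snoc_castSucc] at hab
        exact absurd hab.symm (hwr b')
      · rfl
    · intro j
      rcases Fin.eq_castSucc_or_eq_last j with ⟨j', rfl⟩ | rfl
      · rw [Fin.snoc_castSucc]; exact heB j'
      · rw [Fin.snoc_last]; exact he2B
    · intro a b hab
      rcases Fin.eq_castSucc_or_eq_last a with ⟨a', rfl⟩ | rfl <;>
        rcases Fin.eq_castSucc_or_eq_last b with ⟨b', rfl⟩ | rfl
      · rw [Fin.snoc_castSucc, Fin.snoc_castSucc] at hab
        rw [hei hab]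
      · rw [Fin.snoc_castSucc, Fin.snoc_last] at hab
        exact absurd hab (hnotin a')
      · rw [Fin.snoc_last, Fin.snoc_castSucc] at hab
        exact absurd hab.symm (hnotin b')
      · rfl
    · intro j
      rcases Fin.eq_castSucc_or_eq_last j with ⟨j', rfl⟩ | rfl
      · rw [Fin.snoc_castSucc]
        have h1 : (j'.castSucc : Fin (k+1)).castSucc = (j'.castSucc.castSucc : Fin (k+2)) := rfl
        have h2' : (j'.castSucc : Fin (k+1)).succ = (j'.succ.castSucc : Fin (k+2)) :=
          (Fin.succ_castSucc j').symm ▸ rfl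
        rw [show ((j'.castSucc : Fin (k+1)).succ) = (j'.succ).castSucc from
          (Fin.succ_castSucc j')]
        rw [Fin.snoc_castSucc, Fin.snoc_castSucc]
        exact hcp j'
      · rw [Fin.snoc_last]
        have h1 : (Fin.last k).castSucc = ((Fin.last k).castSucc : Fin (k+2)) := rfl
        rw [show ((Fin.last k : Fin (k+1)).succ) = Fin.last (k+1) from Fin.succ_last k]
        rw [Fin.snoc_last, Fin.snoc_castSucc]
        exact hwe

lemma exists_leaf {B : Finset G.E} (hB : ∀ e ∈ B, ¬ G.CyclicEdge e) (hne : B.Nonempty) :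
    ∃ u, G.idg B u = 1 := by
  by_contra hleaf
  push_neg at hleaf
  have key : ∀ k, 1 ≤ k → ∃ v : Fin (k+1) → G.V, Function.Injective v ∧
      ∃ e : Fin k → G.E, (∀ j, e j ∈ B) ∧ Function.Injective e ∧
        ∀ j : Fin k, G.ends (e j) = (v j.castSucc, v j.succ) ∨
          G.ends (e j) = (v j.succ, v j.castSucc) := by
    intro k
    induction k with
    | zero => omega
    | succ k ih =>
      intro _
      rcases Nat.eq_zero_or_pos k with rfl | hk
      · obtain ⟨e0, he0⟩ := hne
        have hnl := nonloop_of_bridge hB he0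
        refine ⟨fun j => if j.val = 0 then (G.ends e0).1 else (G.ends e0).2, ?_,
          fun _ => e0, fun _ => he0, fun a b _ => Fin.ext (by omega), ?_⟩
        · intro a b hab
          dsimp only at hab
          by_cases ha : a.val = 0 <;> by_cases hb : b.val = 0
          · exact Fin.ext (by omega)
          · rw [if_pos ha, if_neg hb] at hab; exact absurd hab hnl
          · rw [if_neg ha, if_pos hb] at hab; exact absurd hab.symm hnl
          · have := a.isLt; have := b.isLt
            exact Fin.ext (by omega)
        · intro j
          left
          have hc : j.castSucc.val = 0 := by have := j.isLt; simp
          have hs : j.succ.val = 1 := by have := j.isLt; simp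
          simp only [hc, hs]
          norm_num
      · obtain ⟨v, hv, e, heB, hei, hcp⟩ := ih hk
        exact path_ext hB hleaf k hk v hv e heB hei hcp
  obtain ⟨e0, he0⟩ := hne
  have hpos : 0 < Fintype.card G.V := Fintype.card_pos_iff.2 ⟨(G.ends e0).1⟩
  obtain ⟨v, hv, -⟩ := key (Fintype.card G.V) hpos
  have := Fintype.card_le_of_injective v hv
  simp [Fintype.card_fin] at this

lemma forest_bound : ∀ (N : ℕ) (B : Finset G.E), B.card = N →
    (∀ e ∈ B, ¬ G.CyclicEdge e) → B.Nonempty →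
    B.card + 1 ≤ (univ.filter (fun u => 0 < G.idg B u)).card := by
  intro N
  induction N using Nat.strong_induction_on with
  | _ N ih =>
    intro B hcard hB hne
    obtain ⟨u, hu⟩ := exists_leaf hB hne
    obtain ⟨e, heB, hinc⟩ := exists_inc_of_idg_pos (show 0 < G.idg B u by omega)
    have hnl := nonloop_of_bridge hB heB
    have herase := idg_erase heB hinc hnl
    have hBe : (B.erase e).card + 1 = B.card := card_erase_add_one heB
    rcases (B.erase e).eq_empty_or_nonempty with hB' | hB'
    · have hB1 : B.card = 1 := by rw [hB'] at hBe; simpa using hBe.symm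
      have hsub : ({(G.ends e).1, (G.ends e).2} : Finset G.V) ⊆
          univ.filter (fun w => 0 < G.idg B w) := by
        intro x hx
        rcases mem_insert.1 hx with rfl | hx
        · exact mem_filter.2 ⟨mem_univ _, idg_pos_of_inc heB (Or.inl rfl)⟩
        · rw [mem_singleton.1 hx]
          exact mem_filter.2 ⟨mem_univ _, idg_pos_of_inc heB (Or.inr rfl)⟩
      have := card_le_card hsub
      rw [card_pair hnl] at this
      omega
    · have hlt : (B.erase e).card < N := by omega
      have hrec := ih (B.erase e).card hlt (B.erase e) rfl
        (fun e' he' => hB e' (mem_of_mem_erase he')) hB'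
      have hsub : univ.filter (fun w => 0 < G.idg (B.erase e) w) ⊆
          (univ.filter (fun w => 0 < G.idg B w)).erase u := by
        intro w hw
        have h1 : 0 < G.idg (B.erase e) w := (mem_filter.1 hw).2
        refine mem_erase.2 ⟨?_, mem_filter.2 ⟨mem_univ _,
          lt_of_lt_of_le h1 (idg_mono (erase_subset _ _) _)⟩⟩
        rintro rfl
        omega
      have humem : u ∈ univ.filter (fun w => 0 < G.idg B w) :=
        mem_filter.2 ⟨mem_univ _, by omega⟩
      have := card_le_card hsub
      rw [card_erase_of_mem humem] at this
      omega

lemma leaf_count {B : Finset G.E} (hB : ∀ e ∈ B, ¬ G.CyclicEdge e) (hne : B.Nonempty) :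
    (univ.filter (fun u => 3 ≤ G.idg B u)).card + 2 ≤
      (univ.filter (fun u => G.idg B u = 1)).card := by
  set N := univ.filter (fun u => 0 < G.idg B u) with hN
  have hforest := forest_bound B.card B rfl hB hne
  rw [← hN] at hforest
  have hsum : ∑ u ∈ N, G.idg B u = 2 * B.card := by
    rw [hN, Finset.sum_filter_of_ne (fun x _ h => Nat.pos_of_ne_zero h), sum_idg]
  have hpoint : ∀ u ∈ N, 2 + (if 3 ≤ G.idg B u then 1 else 0) ≤
      G.idg B u + (if G.idg B u = 1 then 1 else 0) := by
    intro u hu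
    have := (mem_filter.1 hu).2
    split_ifs <;> omega
  have hsl := Finset.sum_le_sum hpoint
  rw [Finset.sum_add_distrib, Finset.sum_add_distrib, Finset.sum_const, hsum,
    ← Finset.card_filter, ← Finset.card_filter, smul_eq_mul, mul_comm] at hsl
  have h3 : N.filter (fun u => 3 ≤ G.idg B u) = univ.filter (fun u => 3 ≤ G.idg B u) := by
    ext u
    simp only [hN, mem_filter, mem_univ, true_and]
    omega
  have h1 : N.filter (fun u => G.idg B u = 1) = univ.filter (fun u => G.idg B u = 1) := by
    ext u
    simp only [hN, mem_filter, mem_univ, true_and]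
    omega
  rw [h3, h1] at hsl
  omega

lemma onCycle_cdeg {u : G.V} (h : G.OnCycle u) :
    2 ≤ G.idg (univ.filter (fun e => G.CyclicEdge e)) u := by
  obtain ⟨c, i, hi⟩ := h
  have hmem : ∀ j : ZMod c.n, c.e j ∈ univ.filter (fun e => G.CyclicEdge e) :=
    fun j => mem_filter.2 ⟨mem_univ _, ⟨c, j, rfl⟩⟩
  by_cases h1 : c.n = 1
  · have hsub : Subsingleton (ZMod c.n) := by rw [h1]; infer_instance
    have hii : i + 1 = i := Subsingleton.elim _ _
    have hends : G.ends (c.e i) = (u, u) := by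
      rcases c.compat i with hh | hh <;> rw [hh, hii, hi]
    unfold idg
    have ha : c.e i ∈ (univ.filter (fun e => G.CyclicEdge e)).filter
        (fun e => (G.ends e).1 = u) := mem_filter.2 ⟨hmem i, by rw [hends]⟩
    have hb : c.e i ∈ (univ.filter (fun e => G.CyclicEdge e)).filter
        (fun e => (G.ends e).2 = u) := mem_filter.2 ⟨hmem i, by rw [hends]⟩
    have := card_pos.2 ⟨_, ha⟩
    have := card_pos.2 ⟨_, hb⟩
    omega
  · have h2 : 2 ≤ c.n := by have := c.npos; omega
    haveI : Fact (1 < c.n) := ⟨h2⟩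
    have hab : c.e i ≠ c.e (i - 1) := by
      intro hh
      have h3 : i = i - 1 := c.einj hh
      have h4 : i + 1 = i := by
        nth_rewrite 1 [h3]
        ring
      have h5 : (1 : ZMod c.n) = 0 := by
        have := add_eq_left.mp h4
        exact this
      exact one_ne_zero h5
    have hia : G.Inc (c.e i) u := by
      rcases c.compat i with hh | hh
      · exact Or.inl (by rw [hh, hi])
      · exact Or.inr (by rw [hh, hi])
    have hib : G.Inc (c.e (i - 1)) u := by
      have hsc : i - 1 + 1 = i := by ring
      rcases c.compat (i - 1) with hh | hh
      · exact Or.inr (by rw [hh]; dsimp only; rw [hsc, hi])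
      · exact Or.inl (by rw [hh]; dsimp only; rw [hsc, hi])
    exact two_le_idg_of_two_inc (hmem i) (hmem (i-1)) hab hia hib

lemma idg_split (F : Finset G.E) (v : G.V) :
    G.idg F v = G.idg (F.filter (fun e => G.CyclicEdge e)) v +
      G.idg (F.filter (fun e => ¬ G.CyclicEdge e)) v := by
  have c1 : (F.filter (fun e => G.CyclicEdge e)).filter (fun e => (G.ends e).1 = v) =
      (F.filter (fun e => (G.ends e).1 = v)).filter (fun e => G.CyclicEdge e) :=
    filter_comm _ _ _
  have c2 : (F.filter (fun e => G.CyclicEdge e)).filter (fun e => (G.ends e).2 = v) =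
      (F.filter (fun e => (G.ends e).2 = v)).filter (fun e => G.CyclicEdge e) :=
    filter_comm _ _ _
  have c3 : (F.filter (fun e => ¬ G.CyclicEdge e)).filter (fun e => (G.ends e).1 = v) =
      (F.filter (fun e => (G.ends e).1 = v)).filter (fun e => ¬ G.CyclicEdge e) :=
    filter_comm _ _ _
  have c4 : (F.filter (fun e => ¬ G.CyclicEdge e)).filter (fun e => (G.ends e).2 = v) =
      (F.filter (fun e => (G.ends e).2 = v)).filter (fun e => ¬ G.CyclicEdge e) :=
    filter_comm _ _ _
  have d1 := Finset.card_filter_add_card_filter_not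
    (s := F.filter (fun e => (G.ends e).1 = v)) (p := fun e => G.CyclicEdge e)
  have d2 := Finset.card_filter_add_card_filter_not
    (s := F.filter (fun e => (G.ends e).2 = v)) (p := fun e => G.CyclicEdge e)
  unfold idg
  rw [c1, c2, c3, c4]
  omega

end Multigraph

open Finset in
/-- If every vertex of a finite graph Γ has degree ≥ 2 and α is a
fixed-point-free, degree-preserving involution of the vertex set, then some vertex v
is such that both v and α(v) lie on cycles of Γ; moreover if Γ has a vertex of
degree > 2, then v can be chosen of degree > 2. -/
theorem involution_onCycle (Γ : Multigraph) [Nonempty Γ.V]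
    (hdeg : ∀ v : Γ.V, 2 ≤ Γ.deg v)
    (α : Γ.V → Γ.V) (hinv : ∀ v, α (α v) = v) (hfix : ∀ v, α v ≠ v)
    (hpres : ∀ v, Γ.deg (α v) = Γ.deg v) :
    ∃ v : Γ.V, Γ.OnCycle v ∧ Γ.OnCycle (α v) ∧
      ((∃ w : Γ.V, 2 < Γ.deg w) → 2 < Γ.deg v) := by
  classical
  set B := Finset.univ.filter (fun e => ¬ Γ.CyclicEdge e) with hBdef
  set C := Finset.univ.filter (fun e => Γ.CyclicEdge e) with hCdef
  have hB : ∀ e ∈ B, ¬ Γ.CyclicEdge e := by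
    rw [hBdef]; exact fun e he => (Finset.mem_filter.1 he).2
  have hsplit : ∀ u, Γ.deg u = Γ.idg C u + Γ.idg B u := by
    intro u
    rw [Multigraph.deg_eq_idg_univ, hBdef, hCdef]
    exact Multigraph.idg_split Finset.univ u
  have hnc : ∀ u, ¬ Γ.OnCycle u → Γ.idg B u = Γ.deg u := by
    intro u hu
    have hc0 : Γ.idg C u = 0 := by
      by_contra hcc
      obtain ⟨e, he, hinc⟩ := Multigraph.exists_inc_of_idg_pos (Nat.pos_of_ne_zero hcc)
      rw [hCdef] at he
      exact hu (Multigraph.onCycle_of_inc (Finset.mem_filter.1 he).2 hinc)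
    rw [hsplit u, hc0]
    omega
  have hleafT : ∀ u, Γ.idg B u = 1 → Γ.OnCycle u ∧ 2 < Γ.deg u := by
    intro u h1
    have hcd : 0 < Γ.idg C u := by
      have := hdeg u
      rw [hsplit u] at this
      omega
    obtain ⟨e, he, hinc⟩ := Multigraph.exists_inc_of_idg_pos hcd
    rw [hCdef] at he
    have hoc : Γ.OnCycle u := Multigraph.onCycle_of_inc (Finset.mem_filter.1 he).2 hinc
    have h2c := Multigraph.onCycle_cdeg hoc
    rw [← hCdef] at h2c
    exact ⟨hoc, by rw [hsplit u]; omega⟩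
  by_cases hbig : ∃ w, 2 < Γ.deg w
  · by_cases hgood : ∃ u, (Γ.OnCycle u ∧ 2 < Γ.deg u) ∧
        (Γ.OnCycle (α u) ∧ 2 < Γ.deg (α u))
    · obtain ⟨u, ⟨h1, h2⟩, ⟨h3, -⟩⟩ := hgood
      exact ⟨u, h1, h3, fun _ => h2⟩
    · exfalso
      push_neg at hgood
      set T := Finset.univ.filter (fun u => Γ.OnCycle u ∧ 2 < Γ.deg u) with hT
      set S := Finset.univ.filter (fun u => ¬ Γ.OnCycle u ∧ 2 < Γ.deg u) with hS
      have hmap : ∀ u ∈ T, α u ∈ S := by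
        intro u hu
        rw [hT, Finset.mem_filter] at hu
        have h2 : 2 < Γ.deg (α u) := by rw [hpres]; exact hu.2.2
        have h3 : ¬ Γ.OnCycle (α u) := fun hc => absurd (hgood u ⟨hu.2.1, hu.2.2⟩ hc) (not_le.2 h2)
        rw [hS, Finset.mem_filter]
        exact ⟨Finset.mem_univ _, h3, h2⟩
      have hTS : T.card ≤ S.card := Finset.card_le_card_of_injOn α hmap
        (fun a _ b _ h => by rw [← hinv a, h, hinv])
      have hSsub : S ⊆ Finset.univ.filter (fun u => 3 ≤ Γ.idg B u) := by
        intro u hu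
        rw [hS, Finset.mem_filter] at hu
        have h4 := hnc u hu.2.1
        have h5 := hu.2.2
        exact Finset.mem_filter.2 ⟨Finset.mem_univ _, by omega⟩
      have hLsub : Finset.univ.filter (fun u => Γ.idg B u = 1) ⊆ T := by
        intro u hu
        obtain ⟨hoc, hdd⟩ := hleafT u (Finset.mem_filter.1 hu).2
        rw [hT]
        exact Finset.mem_filter.2 ⟨Finset.mem_univ _, hoc, hdd⟩
      rcases S.eq_empty_or_nonempty with hSe | hSne
      · obtain ⟨w, hw⟩ := hbig
        have hwST : w ∈ T ∨ w ∈ S := by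
          by_cases hoc : Γ.OnCycle w
          · exact Or.inl (by rw [hT]; exact Finset.mem_filter.2 ⟨Finset.mem_univ _, hoc, hw⟩)
          · exact Or.inr (by rw [hS]; exact Finset.mem_filter.2 ⟨Finset.mem_univ _, hoc, hw⟩)
        have hT0 : T.card = 0 := by
          rw [hSe] at hTS
          simpa using hTS
        rcases hwST with h | h
        · have := Finset.card_pos.2 ⟨w, h⟩
          omega
        · rw [hSe] at h
          exact absurd h (Finset.notMem_empty w)
      · obtain ⟨s, hs⟩ := hSne
        have h3s : 3 ≤ Γ.idg B s := (Finset.mem_filter.1 (hSsub hs)).2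
        obtain ⟨e, heb, -⟩ := Multigraph.exists_inc_of_idg_pos
          (show 0 < Γ.idg B s by omega)
        have hBne : B.Nonempty := ⟨e, heb⟩
        have hlc := Multigraph.leaf_count hB hBne
        have c1 := Finset.card_le_card hSsub
        have c2 := Finset.card_le_card hLsub
        have hSpos : 0 < S.card := Finset.card_pos.2 ⟨s, hs⟩
        omega
  · push_neg at hbig
    have hall : ∀ u, Γ.OnCycle u := by
      intro u
      by_contra hu
      have h2 : Γ.idg B u = Γ.deg u := hnc u hu
      have hpos : 0 < Γ.idg B u := by have := hdeg u; omega
      obtain ⟨e, heb, -⟩ := Multigraph.exists_inc_of_idg_pos hpos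
      have hlc := Multigraph.leaf_count hB ⟨e, heb⟩
      have hLpos : 0 < (Finset.univ.filter (fun w => Γ.idg B w = 1)).card := by omega
      obtain ⟨l, hl⟩ := Finset.card_pos.1 hLpos
      have h3 := (hleafT l (Finset.mem_filter.1 hl).2).2
      exact absurd h3 (not_lt.2 (hbig l))
    obtain ⟨v⟩ := (inferInstance : Nonempty Γ.V)
    exact ⟨v, hall v, hall (α v), fun h => absurd h (by push_neg; exact hbig)⟩
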